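/- Let μ be a probability measure on ℝ, F its cdf, f the density of its absolutely continuous part. If f > 0 Lebesgue-a.e. on {x : 0 < F(x) < 1}, then for all u, w ∈ (0,1): F^{-1}(w) − F^{-1}(u) = ∫_u^w 1_A(F^{-1}(v))/f(F^{-1}(v)) dv, where A is a Borel set carrying the absolutely continuous part (μ_sing(A)=0, ℝ∖A Lebesgue-null) and f = 1 on ℝ∖A. -/

import Mathlib

open MeasureTheory ProbabilityTheory Filter Set Topology

/-- Left-continuous quantile function of `μ`. -/
noncomputable def qf (μ : Measure ℝ) (u : ℝ) : ℝ := sInf {x : ℝ | u ≤ cdf μ x}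

section aux

variable (μ : Measure ℝ) [IsProbabilityMeasure μ]

lemma qf_nonempty {v : ℝ} (hv : v < 1) : {x : ℝ | v ≤ cdf μ x}.Nonempty := by
  have h : ∀ᶠ x in atTop, v < cdf μ x := (tendsto_cdf_atTop μ).eventually (eventually_gt_nhds hv)
  obtain ⟨x, hx⟩ := h.exists
  exact ⟨x, le_of_lt hx⟩

lemma qf_bddBelow {v : ℝ} (hv : 0 < v) : BddBelow {x : ℝ | v ≤ cdf μ x} := by
  have h : ∀ᶠ x in atBot, cdf μ x < v := (tendsto_cdf_atBot μ).eventually (eventually_lt_nhds hv)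
  obtain ⟨x₀, hx₀⟩ := h.exists
  refine ⟨x₀, fun x hx => ?_⟩
  by_contra hc
  push_neg at hc
  exact absurd (le_trans hx (monotone_cdf μ hc.le)) (not_le.mpr hx₀)

lemma isClosed_le_cdf (v : ℝ) : IsClosed {x : ℝ | v ≤ cdf μ x} := by
  rw [← isOpen_compl_iff, isOpen_iff_mem_nhds]
  intro x hx
  simp only [mem_compl_iff, mem_setOf_eq, not_le] at hx
  have h1 : {y : ℝ | cdf μ y < v} ∈ 𝓝[≥] x :=
    ((cdf μ).right_continuous x).eventually (eventually_lt_nhds hx)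
  have h2 : {y : ℝ | cdf μ y < v} ∈ 𝓝[<] x :=
    mem_of_superset self_mem_nhdsWithin fun y hy =>
      lt_of_le_of_lt (monotone_cdf μ (le_of_lt hy)) hx
  have := mem_sup.mpr ⟨h2, h1⟩
  rw [nhdsLT_sup_nhdsGE] at this
  refine mem_of_superset this fun y hy => ?_
  simp only [mem_setOf_eq] at hy
  simp only [mem_compl_iff, mem_setOf_eq, not_le]
  exact hy

lemma le_cdf_qf {v : ℝ} (hv : v ∈ Ioo (0:ℝ) 1) : v ≤ cdf μ (qf μ v) :=
  (isClosed_le_cdf μ v).csInf_mem (qf_nonempty μ hv.2) (qf_bddBelow μ hv.1)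

lemma qf_le_iff {v x : ℝ} (hv : v ∈ Ioo (0:ℝ) 1) : qf μ v ≤ x ↔ v ≤ cdf μ x := by
  constructor
  · intro h
    exact (le_cdf_qf μ hv).trans (monotone_cdf μ h)
  · intro h
    exact csInf_le (qf_bddBelow μ hv.1) h

lemma qf_monotoneOn : MonotoneOn (qf μ) (Ioo (0:ℝ) 1) := fun v₁ h₁ v₂ h₂ h12 =>
  (qf_le_iff μ h₁).mpr (h12.trans (le_cdf_qf μ h₂))

/-- A globally measurable modification of `qf μ`. -/
noncomputable def Qf (μ : Measure ℝ) : ℝ → ℝ := (Ioo (0:ℝ) 1).piecewise (qf μ) 0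

lemma Qf_eq {v : ℝ} (hv : v ∈ Ioo (0:ℝ) 1) : Qf μ v = qf μ v :=
  Set.piecewise_eq_of_mem _ _ _ hv

lemma measurable_Qf : Measurable (Qf μ) := by
  have hoc : ∀ t : ℝ, MeasurableSet (Ioo (0:ℝ) 1 ∩ {v | qf μ v ≤ t}) := by
    intro t
    refine Set.OrdConnected.measurableSet ⟨?_⟩
    rintro x ⟨hx, hxt⟩ y ⟨hy, hyt⟩ z hz
    have hzI : z ∈ Ioo (0:ℝ) 1 := ⟨lt_of_lt_of_le hx.1 hz.1, lt_of_le_of_lt hz.2 hy.2⟩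
    exact ⟨hzI, le_trans (qf_monotoneOn μ hzI hy hz.2) hyt⟩
  apply measurable_of_Iic
  intro t
  by_cases h0 : (0:ℝ) ≤ t
  · have : Qf μ ⁻¹' Iic t = (Ioo (0:ℝ) 1 ∩ {v | qf μ v ≤ t}) ∪ (Ioo (0:ℝ) 1)ᶜ := by
      ext v
      by_cases hv : v ∈ Ioo (0:ℝ) 1 <;>
        simp [Qf, Set.piecewise, hv, h0]
    rw [this]
    exact (hoc t).union measurableSet_Ioo.compl
  · have : Qf μ ⁻¹' Iic t = Ioo (0:ℝ) 1 ∩ {v | qf μ v ≤ t} := by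
      ext v
      by_cases hv : v ∈ Ioo (0:ℝ) 1 <;>
        simp [Qf, Set.piecewise, hv, h0]
    rw [this]
    exact hoc t

lemma map_Qf : Measure.map (Qf μ) (volume.restrict (Ioo (0:ℝ) 1)) = μ := by
  have h1 : IsFiniteMeasure (Measure.map (Qf μ) (volume.restrict (Ioo (0:ℝ) 1))) := by
    constructor
    rw [Measure.map_apply (measurable_Qf μ) MeasurableSet.univ]
    refine lt_of_le_of_lt (measure_mono (subset_univ _)) ?_
    rw [Measure.restrict_apply_univ, Real.volume_Ioo]
    simp
  refine Measure.ext_of_Iic _ μ fun x => ?_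
  rw [Measure.map_apply (measurable_Qf μ) measurableSet_Iic,
    Measure.restrict_apply ((measurable_Qf μ) measurableSet_Iic)]
  have hpre : Qf μ ⁻¹' Iic x ∩ Ioo (0:ℝ) 1 = Ioo (0:ℝ) 1 ∩ Iic (cdf μ x) := by
    ext v
    constructor
    · rintro ⟨hvx, hv⟩
      rw [mem_preimage, mem_Iic, Qf_eq μ hv] at hvx
      exact ⟨hv, (qf_le_iff μ hv).mp hvx⟩
    · rintro ⟨hv, hvc⟩
      refine ⟨?_, hv⟩
      rw [mem_preimage, mem_Iic, Qf_eq μ hv]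
      exact (qf_le_iff μ hv).mpr hvc
  rw [hpre, ← ofReal_cdf μ x]
  rcases lt_or_ge (cdf μ x) 1 with hc | hc
  · have h2 : Ioo (0:ℝ) 1 ∩ Iic (cdf μ x) = Ioc 0 (cdf μ x) := by
      ext v
      constructor
      · rintro ⟨⟨hv1, _⟩, hv2⟩
        exact ⟨hv1, hv2⟩
      · rintro ⟨hv1, hv2⟩
        exact ⟨⟨hv1, lt_of_le_of_lt hv2 hc⟩, hv2⟩
    rw [h2, Real.volume_Ioc, sub_zero]
  · have hceq : cdf μ x = 1 := le_antisymm (cdf_le_one μ x) hc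
    have h2 : Ioo (0:ℝ) 1 ∩ Iic (cdf μ x) = Ioo (0:ℝ) 1 := by
      refine inter_eq_left.mpr fun v hv => ?_
      rw [mem_Iic, hceq]
      exact le_of_lt hv.2
    rw [h2, Real.volume_Ioo, hceq]
    norm_num

lemma key (f : ℝ → ℝ) (hf0 : ∀ x, 0 ≤ f x) (hfmeas : Measurable f)
    (hdec : μ = μ.singularPart volume
      + volume.withDensity (fun x => ENNReal.ofReal (f x)))
    (A : Set ℝ) (hA : MeasurableSet A) (hsing : μ.singularPart volume A = 0)
    (hAc : volume Aᶜ = 0)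
    (hpos : ∀ᵐ x ∂(volume : Measure ℝ), (0 < cdf μ x ∧ cdf μ x < 1) → 0 < f x)
    (u w : ℝ) (hu : u ∈ Set.Ioo (0 : ℝ) 1) (hw : w ∈ Set.Ioo (0 : ℝ) 1) (huw : u ≤ w) :
    qf μ w - qf μ u = ∫ v in u..w, Set.indicator A (fun y => (f y)⁻¹) (qf μ v) := by
  set a := qf μ u with ha
  set b := qf μ w with hb
  have hab : a ≤ b := qf_monotoneOn μ hu hw huw
  set g : ℝ → ℝ := Set.indicator A (fun y => (f y)⁻¹) with hg
  set φ : ℝ → ENNReal := fun x => ENNReal.ofReal ((f x)⁻¹) with hφ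
  set S : Set ℝ := Ioc a b ∩ (A ∩ {x | 0 < f x}) with hS
  have hSmeas : MeasurableSet S :=
    measurableSet_Ioc.inter (hA.inter (measurableSet_lt measurable_const hfmeas))
  have hsub : Ioc u w ⊆ Ioo (0:ℝ) 1 := fun v hv =>
    ⟨lt_trans hu.1 hv.1, lt_of_le_of_lt hv.2 hw.2⟩
  have hFa : u ≤ cdf μ a := le_cdf_qf μ hu
  have hFb : ∀ x, x < b → cdf μ x < w := by
    intro x hx
    by_contra h
    push_neg at h
    exact absurd ((qf_le_iff μ hw).mpr h) (not_le.mpr hx)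
  -- volume of S
  have hnull : volume (Ioc a b \ (A ∩ {x | 0 < f x})) = 0 := by
    have hsub2 : Ioc a b \ (A ∩ {x | 0 < f x}) ⊆
        Aᶜ ∪ (({b} : Set ℝ) ∪ {x | ¬ ((0 < cdf μ x ∧ cdf μ x < 1) → 0 < f x)}) := by
      rintro x ⟨hx, hx2⟩
      by_cases hxA : x ∈ A
      · right
        by_cases hxb : x = b
        · exact Or.inl hxb
        · refine Or.inr fun hcon => ?_
          have h01 : 0 < cdf μ x ∧ cdf μ x < 1 :=
            ⟨lt_of_lt_of_le hu.1 (hFa.trans (monotone_cdf μ hx.1.le)),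
              lt_trans (hFb x (lt_of_le_of_ne hx.2 hxb)) hw.2⟩
          exact hx2 ⟨hxA, hcon h01⟩
      · exact Or.inl hxA
    exact measure_mono_null hsub2
      (measure_union_null hAc (measure_union_null Real.volume_singleton (ae_iff.mp hpos)))
  have volS : volume S = ENNReal.ofReal (b - a) := by
    rw [← Real.volume_Ioc (a := a) (b := b)]
    refine le_antisymm (measure_mono inter_subset_left) ?_
    calc volume (Ioc a b) ≤ volume (S ∪ (Ioc a b \ (A ∩ {x | 0 < f x}))) := by
          refine measure_mono fun x hx => ?_
          by_cases hxm : x ∈ A ∩ {x | 0 < f x}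
          · exact Or.inl ⟨hx, hxm⟩
          · exact Or.inr ⟨hx, hxm⟩
      _ ≤ volume S + volume (Ioc a b \ (A ∩ {x | 0 < f x})) := measure_union_le _ _
      _ = volume S := by rw [hnull, add_zero]
  -- the exceptional null set
  have habA : MeasurableSet (({a, b} : Set ℝ) ∩ A) :=
    ((measurableSet_singleton b).insert a).inter hA
  have hμab : μ (({a, b} : Set ℝ) ∩ A) = 0 := by
    rw [hdec]
    rw [Measure.add_apply]
    have h1 : μ.singularPart volume (({a, b} : Set ℝ) ∩ A) = 0 :=
      measure_mono_null inter_subset_right hsing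
    have h2 : volume.withDensity (fun x => ENNReal.ofReal (f x)) (({a, b} : Set ℝ) ∩ A) = 0 := by
      refine (withDensity_absolutelyContinuous volume _) ?_
      refine measure_mono_null inter_subset_left ?_
      exact Set.Finite.measure_zero (Set.toFinite _) volume
    rw [h1, h2, add_zero]
  have hn1 : volume ({v : ℝ | Qf μ v ∈ ({a, b} : Set ℝ) ∩ A} ∩ Ioo (0:ℝ) 1) = 0 := by
    have hmap := Measure.map_apply (μ := volume.restrict (Ioo (0:ℝ) 1)) (measurable_Qf μ) habA
    rw [map_Qf μ, Measure.restrict_apply ((measurable_Qf μ) habA)] at hmap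
    rw [← hμab]
    exact hmap.symm
  have hφmeas : Measurable φ := hfmeas.inv.ennreal_ofReal
  have hhmeas : Measurable (S.indicator φ) := hφmeas.indicator hSmeas
  -- the main lintegral computation
  have hmain : ∫⁻ v in Ioc u w, ENNReal.ofReal (g (qf μ v)) ∂volume = ENNReal.ofReal (b - a) := by
    have step1 : ∫⁻ v in Ioc u w, ENNReal.ofReal (g (qf μ v)) ∂volume
        = ∫⁻ v in Ioo (0:ℝ) 1,
            (Ioc u w).indicator (fun v => ENNReal.ofReal (g (qf μ v))) v ∂volume := by
      rw [lintegral_indicator measurableSet_Ioc, Measure.restrict_restrict measurableSet_Ioc,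
        inter_eq_left.mpr hsub]
    have step2 : ∫⁻ v in Ioo (0:ℝ) 1,
          (Ioc u w).indicator (fun v => ENNReal.ofReal (g (qf μ v))) v ∂volume
        = ∫⁻ v in Ioo (0:ℝ) 1, S.indicator φ (Qf μ v) ∂volume := by
      refine lintegral_congr_ae ?_
      rw [EventuallyEq, ae_restrict_iff' measurableSet_Ioo]
      have hne : ∀ᵐ v ∂(volume : Measure ℝ),
          v ∉ ({v : ℝ | Qf μ v ∈ ({a, b} : Set ℝ) ∩ A} ∩ Ioo (0:ℝ) 1) :=
        measure_eq_zero_iff_ae_notMem.mp hn1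
      filter_upwards [hne] with v hv hvI
      have hQ : Qf μ v = qf μ v := Qf_eq μ hvI
      have hnab : qf μ v ∉ ({a, b} : Set ℝ) ∩ A := by
        rw [← hQ]
        exact fun hmem => hv ⟨hmem, hvI⟩
      rw [hQ]
      by_cases hxA : qf μ v ∈ A
      · by_cases hfx : 0 < f (qf μ v)
        · have hiff : v ∈ Ioc u w ↔ qf μ v ∈ S := by
            constructor
            · intro hvuw
              refine ⟨⟨?_, qf_monotoneOn μ hvI hw hvuw.2⟩, hxA, hfx⟩
              refine lt_of_le_of_ne (qf_monotoneOn μ hu hvI (le_of_lt hvuw.1)) fun h => ?_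
              exact hnab ⟨by simp [← h], hxA⟩
            · rintro ⟨⟨hxa, hxb⟩, -⟩
              constructor
              · by_contra h
                push_neg at h
                exact absurd (qf_monotoneOn μ hvI hu h) (not_le.mpr hxa)
              · by_contra h
                push_neg at h
                have h1 : b ≤ qf μ v := qf_monotoneOn μ hw hvI (le_of_lt h)
                have h2 : qf μ v = b := le_antisymm hxb h1
                exact hnab ⟨by simp [h2], hxA⟩
          by_cases hvm : v ∈ Ioc u w
          · rw [indicator_of_mem hvm, indicator_of_mem (hiff.mp hvm)]
            rw [hg]
            rw [indicator_of_mem hxA]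
          · rw [indicator_of_notMem hvm, indicator_of_notMem (fun h => hvm (hiff.mpr h))]
        · have hf0' : f (qf μ v) = 0 := le_antisymm (not_lt.mp hfx) (hf0 _)
          have h1 : ENNReal.ofReal (g (qf μ v)) = 0 := by
            rw [hg, indicator_of_mem hxA, hf0']
            simp
          have h2 : S.indicator φ (qf μ v) = 0 :=
            indicator_of_notMem (fun h => hfx h.2.2) _
          rw [h2]
          by_cases hvm : v ∈ Ioc u w
          · rw [indicator_of_mem hvm, h1]
          · rw [indicator_of_notMem hvm]
      · have h1 : ENNReal.ofReal (g (qf μ v)) = 0 := by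
          rw [hg, indicator_of_notMem hxA]
          simp
        have h2 : S.indicator φ (qf μ v) = 0 :=
          indicator_of_notMem (fun h => hxA h.2.1) _
        rw [h2]
        by_cases hvm : v ∈ Ioc u w
        · rw [indicator_of_mem hvm, h1]
        · rw [indicator_of_notMem hvm]
    have step3 : ∫⁻ v in Ioo (0:ℝ) 1, S.indicator φ (Qf μ v) ∂volume
        = ∫⁻ x, S.indicator φ x ∂μ := by
      rw [← lintegral_map hhmeas (measurable_Qf μ), map_Qf μ]
    have step4 : ∫⁻ x, S.indicator φ x ∂μ = ENNReal.ofReal (b - a) := by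
      rw [lintegral_indicator hSmeas]
      conv_lhs => rw [hdec]
      rw [Measure.restrict_add, lintegral_add_measure]
      have hs0 : (μ.singularPart volume).restrict S = 0 :=
        Measure.restrict_eq_zero.mpr
          (measure_mono_null (inter_subset_right.trans inter_subset_left) hsing)
      rw [hs0, lintegral_zero_measure, zero_add]
      rw [restrict_withDensity hSmeas]
      rw [lintegral_withDensity_eq_lintegral_mul _ hfmeas.ennreal_ofReal hφmeas]
      have hone : ∫⁻ x in S, ((fun x => ENNReal.ofReal (f x)) * φ) x ∂volume
          = ∫⁻ x in S, 1 ∂volume := by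
        refine setLIntegral_congr_fun hSmeas (fun x hx => ?_)
        have hfx : 0 < f x := hx.2.2
        simp only [Pi.mul_apply, hφ]
        rw [← ENNReal.ofReal_mul (hf0 x), mul_inv_cancel₀ (ne_of_gt hfx), ENNReal.ofReal_one]
      rw [hone, setLIntegral_one, volS]
    rw [step1, step2, step3, step4]
  -- convert to Bochner integral
  have hgnn : ∀ v : ℝ, 0 ≤ g (qf μ v) := fun v =>
    indicator_nonneg (fun y _ => inv_nonneg.mpr (hf0 y)) _
  have hmeasg : AEStronglyMeasurable (fun v => g (qf μ v)) (volume.restrict (Ioc u w)) := by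
    have hm : Measurable fun v => g (Qf μ v) :=
      ((hfmeas.inv).indicator hA).comp (measurable_Qf μ)
    refine hm.aestronglyMeasurable.congr ?_
    refine (ae_restrict_mem measurableSet_Ioc).mono fun v hv => ?_
    exact congrArg g (Qf_eq μ (hsub hv))
  rw [intervalIntegral.integral_of_le huw,
    MeasureTheory.integral_eq_lintegral_of_nonneg_ae (ae_of_all _ hgnn) hmeasg,
    hmain, ENNReal.toReal_ofReal (sub_nonneg.mpr hab)]

end aux

theorem stmt9 (μ : Measure ℝ) [IsProbabilityMeasure μ]
    (f : ℝ → ℝ) (hf0 : ∀ x, 0 ≤ f x) (hfmeas : Measurable f)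
    (hdec : μ = μ.singularPart volume
      + volume.withDensity (fun x => ENNReal.ofReal (f x)))
    (A : Set ℝ) (hA : MeasurableSet A) (hsing : μ.singularPart volume A = 0)
    (hAc : volume Aᶜ = 0) (hfA : ∀ x ∉ A, f x = 1)
    (hpos : ∀ᵐ x ∂(volume : Measure ℝ), (0 < cdf μ x ∧ cdf μ x < 1) → 0 < f x)
    (u w : ℝ) (hu : u ∈ Set.Ioo (0 : ℝ) 1) (hw : w ∈ Set.Ioo (0 : ℝ) 1) :
    qf μ w - qf μ u = ∫ v in u..w, Set.indicator A (fun y => (f y)⁻¹) (qf μ v) := by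
  rcases le_total u w with huw | huw
  · exact key μ f hf0 hfmeas hdec A hA hsing hAc hpos u w hu hw huw
  · have h := key μ f hf0 hfmeas hdec A hA hsing hAc hpos w u hw hu huw
    rw [intervalIntegral.integral_symm w u, ← h]
    ring
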